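/- For the mixing schedule β_i = (1-α)^{i-1} with α ∈ (0,1), the sum Σ_{i=1}^{N} min(1, T·β_i) is at most (log T + 2)/α, for any integers N ≥ 1 and T ≥ 1. -/

import Mathlib

open Finset

/-- For the mixing schedule `β_i = (1-α)^(i-1)` with `α ∈ (0,1)`,
`Σ_{i=1}^N min(1, T β_i) ≤ (log T + 2)/α` for all integers `N, T ≥ 1`. -/
theorem sum_min_one_mul_geom_le (α : ℝ) (hα0 : 0 < α) (hα1 : α < 1)
    (N T : ℕ) (hN : 1 ≤ N) (hT : 1 ≤ T) :
    ∑ i ∈ Finset.Icc 1 N, min 1 ((T : ℝ) * (1 - α) ^ (i - 1)) ≤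
      (Real.log T + 2) / α := by
  set r : ℝ := 1 - α with hr
  have hr0 : 0 < r := by simp only [hr]; linarith
  have hr1 : r < 1 := by simp only [hr]; linarith
  have hT0 : (1:ℝ) ≤ (T:ℝ) := by exact_mod_cast hT
  have hTpos : (0:ℝ) < T := by linarith
  have hlogT : 0 ≤ Real.log T := Real.log_nonneg hT0
  have hL : α ≤ -Real.log r := by
    have := Real.log_le_sub_one_of_pos hr0
    simp only [hr] at this ⊢; linarith
  have hL0 : 0 < -Real.log r := lt_of_lt_of_le hα0 hL
  set x := Real.log T / (-Real.log r) with hx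
  have hx0 : 0 ≤ x := div_nonneg hlogT hL0.le
  set m := ⌊x⌋₊ + 1 with hm
  have hmx : x < (m : ℝ) := by
    push_cast [hm]
    exact Nat.lt_floor_add_one x
  have hmx' : (m : ℝ) ≤ x + 1 := by
    push_cast [hm]
    have := Nat.floor_le hx0
    linarith
  have hxle : x ≤ Real.log T / α := by
    rw [hx]
    exact div_le_div_of_nonneg_left hlogT hα0 hL
  -- key: T * r^m ≤ 1
  have hkey : (T : ℝ) * r ^ m ≤ 1 := by
    have h1 : Real.log T ≤ (m : ℝ) * (-Real.log r) := by
      have := mul_le_mul_of_nonneg_right hmx.le hL0.le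
      rwa [hx, div_mul_cancel₀ _ (ne_of_gt hL0)] at this
    have h2 : r ^ m ≤ 1 / T := by
      have heq : r ^ m = Real.exp ((m : ℝ) * Real.log r) := by
        rw [← Real.log_pow, Real.exp_log (pow_pos hr0 m)]
      rw [heq]
      have h3 : (m : ℝ) * Real.log r ≤ -Real.log T := by nlinarith
      calc Real.exp ((m:ℝ) * Real.log r) ≤ Real.exp (-Real.log T) :=
            Real.exp_le_exp.mpr h3
        _ = 1 / T := by rw [Real.exp_neg, Real.exp_log hTpos, one_div]
    calc (T : ℝ) * r ^ m ≤ (T : ℝ) * (1 / T) :=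
          mul_le_mul_of_nonneg_left h2 (by linarith)
      _ = 1 := by field_simp
  -- rewrite the sum over range N
  have hsum : ∑ i ∈ Finset.Icc 1 N, min 1 ((T : ℝ) * r ^ (i - 1)) =
      ∑ i ∈ Finset.range N, min 1 ((T : ℝ) * r ^ i) := by
    rw [← Finset.Ico_add_one_right_eq_Icc, Finset.sum_Ico_eq_sum_range]
    simp
  rw [hsum]
  have h1α : (1:ℝ) ≤ 1 / α := by rw [le_div_iff₀ hα0]; linarith
  rcases le_or_gt m N with hmn | hmn
  · -- split at m
    have hsplit : ∑ i ∈ Finset.range N, min 1 ((T : ℝ) * r ^ i) =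
        ∑ i ∈ Finset.range m, min 1 ((T : ℝ) * r ^ i)
          + ∑ i ∈ Finset.Ico m N, min 1 ((T : ℝ) * r ^ i) := by
      rw [Finset.range_eq_Ico, Finset.range_eq_Ico,
        Finset.sum_Ico_consecutive _ (Nat.zero_le m) hmn]
    rw [hsplit]
    have h1 : ∑ i ∈ Finset.range m, min 1 ((T : ℝ) * r ^ i) ≤ (m : ℝ) := by
      calc ∑ i ∈ Finset.range m, min 1 ((T : ℝ) * r ^ i)
          ≤ ∑ _i ∈ Finset.range m, (1:ℝ) :=
            Finset.sum_le_sum fun i _ => min_le_left _ _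
        _ = (m : ℝ) := by simp
    have h2 : ∑ i ∈ Finset.Ico m N, min 1 ((T : ℝ) * r ^ i) ≤ 1 / α := by
      calc ∑ i ∈ Finset.Ico m N, min 1 ((T : ℝ) * r ^ i)
          ≤ ∑ i ∈ Finset.Ico m N, (T : ℝ) * r ^ i :=
            Finset.sum_le_sum fun i _ => min_le_right _ _
        _ = (T : ℝ) * ∑ i ∈ Finset.Ico m N, r ^ i := by rw [Finset.mul_sum]
        _ ≤ (T : ℝ) * (r ^ m / (1 - r)) := by
            apply mul_le_mul_of_nonneg_left (geom_sum_Ico_le_of_lt_one hr0.le hr1)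
            linarith
        _ = ((T : ℝ) * r ^ m) / α := by rw [hr]; ring_nf
        _ ≤ 1 / α := by
            exact div_le_div_of_nonneg_right hkey hα0.le
    have hmle : (m : ℝ) ≤ (Real.log T + 1) / α := by
      calc (m : ℝ) ≤ x + 1 := hmx'
        _ ≤ Real.log T / α + 1 / α := by linarith
        _ = (Real.log T + 1) / α := by ring
    calc ∑ i ∈ Finset.range m, min 1 ((T : ℝ) * r ^ i)
          + ∑ i ∈ Finset.Ico m N, min 1 ((T : ℝ) * r ^ i)
        ≤ (Real.log T + 1) / α + 1 / α := add_le_add (h1.trans hmle) h2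
      _ = (Real.log T + 2) / α := by ring
  · -- N < m : just bound each term by 1
    have h1 : ∑ i ∈ Finset.range N, min 1 ((T : ℝ) * r ^ i) ≤ (N : ℝ) := by
      calc ∑ i ∈ Finset.range N, min 1 ((T : ℝ) * r ^ i)
          ≤ ∑ _i ∈ Finset.range N, (1:ℝ) :=
            Finset.sum_le_sum fun i _ => min_le_left _ _
        _ = (N : ℝ) := by simp
    have hNm : (N : ℝ) ≤ (m : ℝ) := by exact_mod_cast hmn.le
    have hmb : (m : ℝ) ≤ (Real.log T + 2) / α := by
      have h2α : (1:ℝ) ≤ 2 / α := by rw [le_div_iff₀ hα0]; linarith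
      calc (m : ℝ) ≤ x + 1 := hmx'
        _ ≤ Real.log T / α + 2 / α := by linarith
        _ = (Real.log T + 2) / α := by ring
    linarith
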